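/- Let $N$ be a lattice of rank $r$ and $G$ a finite group acting on $N$ by lattice automorphisms. Let $S = \{g \cdot e_i : g \in G,\ 1 \le i \le r\}$ where $e_1,\dots,e_r$ is a basis of $N$. Then the fan obtained by subdividing $N_{\mathbb{R}}$ along the hyperplanes orthogonal to the elements of $S$ (i.e., whose maximal cones are the closures of the connected components of $N_{\mathbb{R}} \setminus \bigcup_{x \in S} x^{\perp}$) is a complete $G$-invariant fan in $N_{\mathbb{R}}$. -/

import Mathlib

open Filter Topology

/-- A finite set of nonzero vectors admits a vector not orthogonal to any of them. -/
lemma exists_generic {E : Type*} [NormedAddCommGroup E] [InnerProductSpace ℝ E]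
    {S : Set E} (hfin : S.Finite) (hne : ∀ x ∈ S, x ≠ 0) :
    ∃ w : E, ∀ x ∈ S, (inner ℝ x w : ℝ) ≠ 0 := by
  classical
  set s : Finset (Subspace ℝ E) := hfin.toFinset.image (fun x => (ℝ ∙ x)ᗮ) with hs
  have htop : ⊤ ∉ s := by
    intro h
    rw [hs, Finset.mem_image] at h
    obtain ⟨x, hx, hx'⟩ := h
    have hxS : x ∈ S := hfin.mem_toFinset.1 hx
    have : x ∈ (ℝ ∙ x)ᗮ := by rw [hx']; trivial
    have := Submodule.mem_orthogonal_singleton_iff_inner_right.1 this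
    exact hne x hxS (inner_self_eq_zero.1 this)
  have := Subspace.biUnion_ne_univ_of_top_notMem htop
  rw [Ne, Set.eq_univ_iff_forall] at this
  push_neg at this
  obtain ⟨w, hw⟩ := this
  refine ⟨w, fun x hx h => ?_⟩
  apply hw
  simp only [Set.mem_iUnion]
  refine ⟨(ℝ ∙ x)ᗮ, ?_, Submodule.mem_orthogonal_singleton_iff_inner_right.2 h⟩
  exact Finset.mem_image.2 ⟨x, hfin.mem_toFinset.2 hx, rfl⟩

theorem hyperplane_fan_complete_invariant
    (r : ℕ) (G : Type*) [Group G] [Finite G]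
    (ρ : G →* (EuclideanSpace ℝ (Fin r) ≃ₗᵢ[ℝ] EuclideanSpace ℝ (Fin r)))
    (L : AddSubgroup (EuclideanSpace ℝ (Fin r)))
    (hL : L = AddSubgroup.closure
      (Set.range fun i : Fin r => EuclideanSpace.single i (1 : ℝ)))
    (hlat : ∀ g : G, ∀ v ∈ L, ρ g v ∈ L)
    (S : Set (EuclideanSpace ℝ (Fin r)))
    (hS : S = {v | ∃ (g : G) (i : Fin r), v = ρ g (EuclideanSpace.single i (1 : ℝ))})
    (C : EuclideanSpace ℝ (Fin r) → Set (EuclideanSpace ℝ (Fin r)))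
    (hC : ∀ p, C p = {v | ∀ x ∈ S,
      (0 < (inner ℝ x p : ℝ) → 0 ≤ (inner ℝ x v : ℝ)) ∧
      ((inner ℝ x p : ℝ) < 0 → (inner ℝ x v : ℝ) ≤ 0)}) :
    (∀ v, ∃ p, (∀ x ∈ S, (inner ℝ x p : ℝ) ≠ 0) ∧ v ∈ C p) ∧
    (∀ (g : G) (p : EuclideanSpace ℝ (Fin r)), (∀ x ∈ S, (inner ℝ x p : ℝ) ≠ 0) →
      ∃ q, (∀ x ∈ S, (inner ℝ x q : ℝ) ≠ 0) ∧ (ρ g) '' (C p) = C q) := by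
  -- Basic facts about S
  have hSfin : S.Finite := by
    rw [hS]
    have : {v | ∃ (g : G) (i : Fin r), v = ρ g (EuclideanSpace.single i (1 : ℝ))} =
        Set.range (fun gi : G × Fin r => ρ gi.1 (EuclideanSpace.single gi.2 (1 : ℝ))) := by
      ext v; simp [eq_comm, Prod.exists]
    rw [this]
    exact Set.finite_range _
  have hSne : ∀ x ∈ S, x ≠ 0 := by
    intro x hx h0
    rw [hS] at hx
    obtain ⟨g, i, rfl⟩ := hx
    have : ‖(ρ g) (EuclideanSpace.single i (1 : ℝ))‖ = 1 := by
      rw [(ρ g).norm_map, EuclideanSpace.norm_single]; simp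
    rw [h0] at this; simp at this
  -- key: inner x (ρ g u) = inner (ρ g⁻¹ x) u
  have hinv : ∀ (g : G) (x : EuclideanSpace ℝ (Fin r)), ρ g (ρ g⁻¹ x) = x := by
    intro g x
    have : (ρ g) ((ρ g⁻¹) x) = ((ρ g) * (ρ g⁻¹)) x := rfl
    rw [this, ← map_mul, mul_inv_cancel, map_one]; rfl
  have hkey : ∀ (g : G) (x u : EuclideanSpace ℝ (Fin r)),
      (inner ℝ x (ρ g u) : ℝ) = inner ℝ (ρ g⁻¹ x) u := by
    intro g x u
    conv_lhs => rw [← hinv g x]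
    exact (ρ g).inner_map_map _ _
  have hSinv : ∀ (g : G), ∀ x ∈ S, ρ g x ∈ S := by
    intro g x hx
    rw [hS] at hx ⊢
    obtain ⟨h, i, rfl⟩ := hx
    exact ⟨g * h, i, by rw [map_mul]; rfl⟩
  constructor
  · -- completeness
    intro v
    obtain ⟨w, hw⟩ := exists_generic hSfin hSne
    have hev : ∀ᶠ t : ℝ in 𝓝[>] 0, ∀ x ∈ S,
        (inner ℝ x (v + t • w) : ℝ) ≠ 0 ∧
        (0 < (inner ℝ x (v + t • w) : ℝ) → 0 ≤ (inner ℝ x v : ℝ)) ∧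
        ((inner ℝ x (v + t • w) : ℝ) < 0 → (inner ℝ x v : ℝ) ≤ 0) := by
      rw [hSfin.eventually_all]
      intro x hx
      have hval : ∀ t : ℝ, (inner ℝ x (v + t • w) : ℝ) = inner ℝ x v + t * inner ℝ x w := by
        intro t
        rw [inner_add_right, real_inner_smul_right]
      by_cases hc : (inner ℝ x v : ℝ) = 0
      · filter_upwards [self_mem_nhdsWithin] with t ht
        rw [hval, hc, zero_add]
        refine ⟨mul_ne_zero (ne_of_gt ht) (hw x hx), fun _ => le_refl 0, fun _ => le_refl 0⟩
      · have habs : 0 < |(inner ℝ x v : ℝ)| := abs_pos.2 hc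
        have htend : Tendsto (fun t : ℝ => |t * inner ℝ x w|) (𝓝[>] 0) (𝓝 0) := by
          have h' : Tendsto (fun t : ℝ => t * inner ℝ x w) (𝓝[>] 0) (𝓝 0) := by
            simpa using ((by fun_prop : Continuous (fun t : ℝ => t * inner ℝ x w)).tendsto (0 : ℝ)).mono_left
              nhdsWithin_le_nhds
          simpa using h'.abs
        have := htend.eventually (eventually_lt_nhds habs)
        filter_upwards [this] with t ht
        rw [hval]
        have h1 : ∀ {c d : ℝ}, |d| < |c| → 0 < c + d → 0 < c := by
          intro c d hd hcd
          by_contra h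
          push_neg at h
          have : c + d ≤ c + |d| := by linarith [le_abs_self d]
          have : c + d < c + |c| := lt_of_le_of_lt this (by linarith)
          rw [abs_of_nonpos h] at this
          linarith
        have h2 : ∀ {c d : ℝ}, |d| < |c| → c + d < 0 → c < 0 := by
          intro c d hd hcd
          by_contra h
          push_neg at h
          have : c - |d| ≤ c + d := by linarith [neg_abs_le d]
          rw [abs_of_nonneg h] at hd
          linarith
        refine ⟨?_, fun h => le_of_lt (h1 ht h), fun h => le_of_lt (h2 ht h)⟩
        intro h0
        have he : (inner ℝ x v : ℝ) = -(t * inner ℝ x w) := by linarith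
        rw [he, abs_neg] at ht
        exact lt_irrefl _ ht
    obtain ⟨t, ht⟩ := hev.exists
    refine ⟨v + t • w, fun x hx => (ht x hx).1, ?_⟩
    rw [hC]
    exact fun x hx => (ht x hx).2
  · -- invariance
    intro g p hp
    refine ⟨ρ g p, ?_, ?_⟩
    · intro x hx
      rw [hkey]
      exact hp _ (hSinv g⁻¹ x hx)
    · ext u
      constructor
      · rintro ⟨v, hv, rfl⟩
        rw [hC] at hv ⊢
        intro x hx
        rw [hkey, hkey]
        exact hv _ (hSinv g⁻¹ x hx)
      · intro hu
        rw [hC] at hu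
        refine ⟨ρ g⁻¹ u, ?_, hinv g u⟩
        rw [hC]
        intro x hx
        have := hu (ρ g x) (hSinv g x hx)
        rw [hkey] at this
        have e := hinv g⁻¹ x
        rw [inv_inv] at e
        rw [e] at this
        rw [hkey g⁻¹ x u, inv_inv]
        exact this
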